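/- Let μ ∈ 𝓜, i.e., a measure on ℝ³ with μ(ab) + μ₂(ab) < ∞ for all a,b ∈ ℝ², and define H_μ(b) := μ₁(ob₊) − μ₁(ob₋) where dμ₁(x,v,r) = r dμ(x,v,r). Then for all a, b ∈ ℝ², H_μ(b) − H_μ(a) = μ₁(ab₊) − μ₁(ab₋). -/

import Mathlib

open Set MeasureTheory ENNReal

noncomputable section

/-- The line `ℓ(x,v) = {(x+vt, t) : t ∈ ℝ}` in the space-time plane. -/
def lineSet (x v : ℝ) : Set (ℝ × ℝ) := {p | p.1 = x + v * p.2}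

/-- Open left half-plane of the line `ℓ(x,v)`. -/
def lef (x v : ℝ) : Set (ℝ × ℝ) := {p | p.1 < x + v * p.2}

/-- Closed right half-plane of the line `ℓ(x,v)`. -/
def rig (x v : ℝ) : Set (ℝ × ℝ) := {p | x + v * p.2 ≤ p.1}

/-- The set `pq ⊆ ℝ³` of `(x,v,r)` whose line meets segment `pq`. -/
def cross3 (p q : ℝ × ℝ) : Set (ℝ × ℝ × ℝ) :=
  {z | (lineSet z.1 z.2.1 ∩ segment ℝ p q).Nonempty}

/-- The set `pq₊ ⊆ ℝ³`: `p` in the open left half-plane, `q` in the closed right one. -/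
def crossP3 (p q : ℝ × ℝ) : Set (ℝ × ℝ × ℝ) :=
  {z | p ∈ lef z.1 z.2.1 ∧ q ∈ rig z.1 z.2.1}

/-- The set `pq₋ ⊆ ℝ³`: `q` in the open left half-plane, `p` in the closed right one. -/
def crossM3 (p q : ℝ × ℝ) : Set (ℝ × ℝ × ℝ) :=
  {z | p ∈ rig z.1 z.2.1 ∧ q ∈ lef z.1 z.2.1}

/-- The measure `μ₁` with density `r` with respect to `μ`. -/
def mu1 (μ : Measure (ℝ × ℝ × ℝ)) : Measure (ℝ × ℝ × ℝ) :=
  μ.withDensity (fun z => ENNReal.ofReal z.2.2)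

/-- The measure `μ₂` with density `r²` with respect to `μ`. -/
def mu2 (μ : Measure (ℝ × ℝ × ℝ)) : Measure (ℝ × ℝ × ℝ) :=
  μ.withDensity (fun z => ENNReal.ofReal (z.2.2 ^ 2))

/-- The multitime field `H_μ(b) = μ₁(ob₊) − μ₁(ob₋)`; `o` is the origin. -/
def Hfield (μ : Measure (ℝ × ℝ × ℝ)) (b : ℝ × ℝ) : ℝ :=
  (mu1 μ (crossP3 0 b)).toReal - (mu1 μ (crossM3 0 b)).toReal

lemma measurable_crossP3 (p q : ℝ × ℝ) : MeasurableSet (crossP3 p q) := by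
  have h : crossP3 p q =
      {z : ℝ × ℝ × ℝ | p.1 < z.1 + z.2.1 * p.2} ∩ {z | z.1 + z.2.1 * q.2 ≤ q.1} := rfl
  rw [h]
  exact (measurableSet_lt measurable_const (by fun_prop)).inter
    (measurableSet_le (by fun_prop) measurable_const)

lemma crossM3_eq (p q : ℝ × ℝ) : crossM3 p q = crossP3 q p := by
  ext z; exact and_comm

lemma measurable_crossM3 (p q : ℝ × ℝ) : MeasurableSet (crossM3 p q) := by
  rw [crossM3_eq]; exact measurable_crossP3 q p

lemma crossP3_subset (p q : ℝ × ℝ) : crossP3 p q ⊆ cross3 p q := by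
  rintro ⟨x, v, r⟩ ⟨h1, h2⟩
  simp only [lef, rig, Set.mem_setOf_eq] at h1 h2
  have hd0 : 0 < x + v * p.2 - p.1 := by linarith
  have hden : 0 < (x + v * p.2 - p.1) - (x + v * q.2 - q.1) := by linarith
  set t : ℝ := (x + v * p.2 - p.1) / ((x + v * p.2 - p.1) - (x + v * q.2 - q.1)) with ht
  have key : t * ((x + v * p.2 - p.1) - (x + v * q.2 - q.1)) = x + v * p.2 - p.1 :=
    div_mul_cancel₀ _ hden.ne'
  have ht0 : 0 ≤ t := (div_pos hd0 hden).le
  have ht1 : t ≤ 1 := by rw [ht, div_le_one hden]; linarith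
  refine ⟨(1 - t) • p + t • q, ?_, ?_⟩
  · show ((1 - t) • p + t • q).1 = x + v * ((1 - t) • p + t • q).2
    simp only [Prod.fst_add, Prod.snd_add, Prod.smul_fst, Prod.smul_snd, smul_eq_mul]
    linear_combination key
  · exact ⟨1 - t, t, by linarith, ht0, by ring, rfl⟩

lemma crossM3_subset (p q : ℝ × ℝ) : crossM3 p q ⊆ cross3 p q := by
  rw [crossM3_eq]
  intro z hz
  have := crossP3_subset q p hz
  simpa only [cross3, Set.mem_setOf_eq, segment_symm] using this

lemma mu1_le (μ : Measure (ℝ × ℝ × ℝ)) {S : Set (ℝ × ℝ × ℝ)} (hS : MeasurableSet S) :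
    mu1 μ S ≤ μ S + mu2 μ S := by
  rw [mu1, mu2, withDensity_apply _ hS, withDensity_apply _ hS]
  have hpt : ∀ z : ℝ × ℝ × ℝ, ENNReal.ofReal z.2.2 ≤ 1 + ENNReal.ofReal (z.2.2 ^ 2) := by
    intro z
    rcases le_or_gt z.2.2 0 with h | h
    · simp [ENNReal.ofReal_of_nonpos h]
    · rw [← ENNReal.ofReal_one, ← ENNReal.ofReal_add (by norm_num) (sq_nonneg _)]
      exact ENNReal.ofReal_le_ofReal (by nlinarith)
  calc ∫⁻ z in S, ENNReal.ofReal z.2.2 ∂μ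
      ≤ ∫⁻ z in S, (1 + ENNReal.ofReal (z.2.2 ^ 2)) ∂μ := lintegral_mono hpt
    _ = μ S + ∫⁻ z in S, ENNReal.ofReal (z.2.2 ^ 2) ∂μ := by
        rw [lintegral_add_left measurable_const]
        simp

lemma mu1_fin (μ : Measure (ℝ × ℝ × ℝ))
    (hM : ∀ a b : ℝ × ℝ, μ (cross3 a b) + mu2 μ (cross3 a b) < ⊤)
    (p q : ℝ × ℝ) {S : Set (ℝ × ℝ × ℝ)} (hS : MeasurableSet S)
    (hsub : S ⊆ cross3 p q) : mu1 μ S ≠ ⊤ := by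
  have h1 : mu1 μ S ≤ μ (cross3 p q) + mu2 μ (cross3 p q) :=
    (mu1_le μ hS).trans (add_le_add (measure_mono hsub) (measure_mono hsub))
  exact (h1.trans_lt (hM p q)).ne

/-- for `μ ∈ 𝓜`, the surface differences satisfy
`H_μ(b) − H_μ(a) = μ₁(ab₊) − μ₁(ab₋)`. -/
theorem statement7 (μ : Measure (ℝ × ℝ × ℝ))
    (hM : ∀ a b : ℝ × ℝ, μ (cross3 a b) + mu2 μ (cross3 a b) < ⊤) :
    ∀ a b : ℝ × ℝ,
      Hfield μ b - Hfield μ a =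
        (mu1 μ (crossP3 a b)).toReal - (mu1 μ (crossM3 a b)).toReal := by
  intro a b
  have hrig : ∀ (x v : ℝ) (p : ℝ × ℝ), p ∈ rig x v ↔ p ∉ lef x v := fun x v p => by simp [rig, lef, Set.mem_setOf_eq, not_lt]
  have hmu : ∀ (S : Set (ℝ × ℝ × ℝ)), MeasurableSet S →
      mu1 μ S = ∫⁻ z, S.indicator (fun _ => (1 : ℝ≥0∞)) z ∂(mu1 μ) := by
    intro S hS
    rw [lintegral_indicator hS]
    simp
  have key : mu1 μ (crossP3 0 b) + mu1 μ (crossM3 0 a) + mu1 μ (crossM3 a b)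
      = mu1 μ (crossM3 0 b) + mu1 μ (crossP3 0 a) + mu1 μ (crossP3 a b) := by
    rw [hmu _ (measurable_crossP3 0 b), hmu _ (measurable_crossM3 0 a),
      hmu _ (measurable_crossM3 a b), hmu _ (measurable_crossM3 0 b),
      hmu _ (measurable_crossP3 0 a), hmu _ (measurable_crossP3 a b),
      ← lintegral_add_left (measurable_const.indicator (measurable_crossP3 0 b)),
      ← lintegral_add_left (show Measurable (fun z => (crossP3 0 b).indicator (fun _ => (1 : ℝ≥0∞)) z + (crossM3 0 a).indicator (fun _ => (1 : ℝ≥0∞)) z) from (measurable_const.indicator (measurable_crossP3 0 b)).add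
        (measurable_const.indicator (measurable_crossM3 0 a))),
      ← lintegral_add_left (measurable_const.indicator (measurable_crossM3 0 b)),
      ← lintegral_add_left (show Measurable (fun z => (crossM3 0 b).indicator (fun _ => (1 : ℝ≥0∞)) z + (crossP3 0 a).indicator (fun _ => (1 : ℝ≥0∞)) z) from (measurable_const.indicator (measurable_crossM3 0 b)).add
        (measurable_const.indicator (measurable_crossP3 0 a)))]
    apply lintegral_congr
    intro z
    by_cases h0 : (0 : ℝ × ℝ) ∈ lef z.1 z.2.1 <;>
      by_cases ha : a ∈ lef z.1 z.2.1 <;>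
      by_cases hb : b ∈ lef z.1 z.2.1 <;>
      simp [crossP3, crossM3, Set.indicator_apply, Set.mem_setOf_eq, hrig, h0, ha, hb]
  have fPb : mu1 μ (crossP3 0 b) ≠ ⊤ :=
    mu1_fin μ hM 0 b (measurable_crossP3 0 b) (crossP3_subset 0 b)
  have fMb : mu1 μ (crossM3 0 b) ≠ ⊤ :=
    mu1_fin μ hM 0 b (measurable_crossM3 0 b) (crossM3_subset 0 b)
  have fPa : mu1 μ (crossP3 0 a) ≠ ⊤ :=
    mu1_fin μ hM 0 a (measurable_crossP3 0 a) (crossP3_subset 0 a)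
  have fMa : mu1 μ (crossM3 0 a) ≠ ⊤ :=
    mu1_fin μ hM 0 a (measurable_crossM3 0 a) (crossM3_subset 0 a)
  have fPab : mu1 μ (crossP3 a b) ≠ ⊤ :=
    mu1_fin μ hM a b (measurable_crossP3 a b) (crossP3_subset a b)
  have fMab : mu1 μ (crossM3 a b) ≠ ⊤ :=
    mu1_fin μ hM a b (measurable_crossM3 a b) (crossM3_subset a b)
  have h := congrArg ENNReal.toReal key
  rw [ENNReal.toReal_add (ENNReal.add_ne_top.2 ⟨fPb, fMa⟩) fMab,
    ENNReal.toReal_add fPb fMa,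
    ENNReal.toReal_add (ENNReal.add_ne_top.2 ⟨fMb, fPa⟩) fPab,
    ENNReal.toReal_add fMb fPa] at h
  simp only [Hfield]
  linarith

end
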